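/- For polynomials f and g over a commutative ring R, the product c(f)·c(g) is contained in the integral closure of c(fg). In particular c(fg) and c(f)·c(g) have the same integral closure. -/

import Mathlib

set_option synthInstance.maxHeartbeats 400000
set_option maxHeartbeats 1000000

open Polynomial

/-- The content ideal of a polynomial: the ideal generated by its coefficients. -/
noncomputable def cont {R : Type*} [CommRing R] (p : R[X]) : Ideal R :=
  Ideal.span (Set.range p.coeff)

/-- The minimal number of generators of an ideal. -/
noncomputable def mug {R : Type*} [CommRing R] (I : Ideal R) : ℕ :=
  sInf {n | ∃ x : Fin n → R, Ideal.span (Set.range x) = I}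

/-- The Dedekind--Mertens number of a polynomial. -/
noncomputable def dmNumber (R : Type*) [CommRing R] (g : R[X]) : ℕ :=
  sInf {k | 0 < k ∧ ∀ f : R[X], cont (f * g) * cont f ^ (k - 1) = cont f ^ k * cont g}

/-- The polarized Dedekind--Mertens number of a polynomial. -/
noncomputable def polDmNumber (R : Type*) [CommRing R] (g : R[X]) : ℕ :=
  sInf {k | 0 < k ∧ ∀ f : Fin k → R[X],
    (∑ i, cont (f i * g) * ∏ j ∈ Finset.univ.erase i, cont (f j)) =
      (∏ i, cont (f i)) * cont g}

/-- `x` is in the integral closure of the ideal `I`. -/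
def memIntCl {R : Type*} [CommRing R] (I : Ideal R) (x : R) : Prop :=
  ∃ k : ℕ, 0 < k ∧ ∃ a : ℕ → R, (∀ i, 1 ≤ i → i ≤ k → a i ∈ I ^ i) ∧
    x ^ k + ∑ i ∈ Finset.Icc 1 k, a i * x ^ (k - i) = 0

section Aux

variable {R : Type*} [CommRing R]



lemma coeff_mem_cont (p : R[X]) (i : ℕ) : p.coeff i ∈ cont p :=
  Ideal.subset_span (Set.mem_range_self i)

lemma cont_le_iff {p : R[X]} {I : Ideal R} : cont p ≤ I ↔ ∀ i, p.coeff i ∈ I := by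
  rw [cont, Ideal.span_le, Set.range_subset_iff]; rfl

lemma cont_mul_le (p q : R[X]) : cont (p * q) ≤ cont p * cont q := by
  rw [cont_le_iff]
  intro i
  rw [coeff_mul]
  exact Ideal.sum_mem _ fun c _ => Ideal.mul_mem_mul (coeff_mem_cont p c.1) (coeff_mem_cont q c.2)

lemma cont_add_le (p q : R[X]) : cont (p + q) ≤ cont p + cont q := by
  rw [cont_le_iff]
  intro i
  rw [coeff_add]
  exact Submodule.add_mem_sup (coeff_mem_cont p i) (coeff_mem_cont q i)

lemma cont_C_mul_X_pow_mul_le (b : R) (m : ℕ) (p : R[X]) :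
    cont (C b * X ^ m * p) ≤ Ideal.span {b} * cont p := by
  rw [cont_le_iff]
  intro i
  rw [mul_comm (C b) (X ^ m), mul_assoc, coeff_X_pow_mul']
  split_ifs with h
  · rw [coeff_C_mul]
    exact Ideal.mul_mem_mul (Ideal.mem_span_singleton_self b) (coeff_mem_cont p _)
  · exact zero_mem _

lemma mul_span_singleton_le_cont (p : R[X]) (b : R) :
    cont p * Ideal.span {b} ≤ cont (p * C b) := by
  rw [Ideal.mul_le]
  intro r hr s hs
  rw [Ideal.mem_span_singleton] at hs
  obtain ⟨c, rfl⟩ := hs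
  have h1 : r * (b * c) = (r * b) * c := by ring
  rw [h1]
  refine Ideal.mul_mem_right _ _ ?_
  refine Submodule.span_induction (p := fun r _ => r * b ∈ cont (p * C b)) ?_ ?_ ?_ ?_ hr
  · rintro _ ⟨i, rfl⟩
    rw [← coeff_mul_C]
    exact coeff_mem_cont _ i
  · simp
  · intro x y _ _ hx hy; rw [add_mul]; exact add_mem hx hy
  · intro c x _ hx; rw [smul_eq_mul, mul_assoc]; exact Ideal.mul_mem_left _ _ hx

lemma coeff_mul_expand {f g : R[X]} {m : ℕ} (hg : g.natDegree ≤ m) (s : ℕ) :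
    (f * g).coeff (m + s) = g.coeff m * f.coeff s +
      ∑ t ∈ Finset.range m, g.coeff t * f.coeff (m + s - t) := by
  rw [mul_comm f g, coeff_mul, Finset.Nat.sum_antidiagonal_eq_sum_range_succ_mk]
  have hsub : Finset.range (m + 1) ⊆ Finset.range (m + s + 1) :=
    Finset.range_subset_range.mpr (by omega)
  rw [← Finset.sum_subset hsub ?_]
  · rw [Finset.sum_range_succ, Nat.add_sub_cancel_left, add_comm]
  · intro t ht hnt
    have h1 : m < t := by simpa using hnt
    have : g.coeff t = 0 := coeff_eq_zero_of_natDegree_lt (lt_of_le_of_lt hg h1)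
    rw [this, zero_mul]

/-- **Dedekind–Mertens**. -/
theorem dedekind_mertens (f : R[X]) :
    ∀ n (g : R[X]), g.natDegree ≤ n →
      cont f ^ (n + 1) * cont g ≤ cont f ^ n * cont (f * g) := by
  intro n
  induction n with
  | zero =>
    intro g hg
    rw [eq_C_of_natDegree_le_zero hg]
    simp only [zero_add, pow_one, pow_zero, one_mul]
    have h1 : cont (C (g.coeff 0) : R[X]) ≤ Ideal.span {g.coeff 0} := by
      rw [cont_le_iff]
      intro i
      rw [coeff_C]
      split_ifs
      · exact Ideal.mem_span_singleton_self _
      · exact zero_mem _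
    calc cont f * cont (C (g.coeff 0)) ≤ cont f * Ideal.span {g.coeff 0} :=
          Ideal.mul_mono_right h1
      _ ≤ cont (f * C (g.coeff 0)) := mul_span_singleton_le_cont f _
  | succ n IH =>
    intro g hg
    by_cases hdeg : g.natDegree ≤ n
    · calc cont f ^ (n + 2) * cont g = cont f * (cont f ^ (n + 1) * cont g) := by ring
        _ ≤ cont f * (cont f ^ n * cont (f * g)) := Ideal.mul_mono_right (IH g hdeg)
        _ = cont f ^ (n + 1) * cont (f * g) := by ring
    have hdeg : g.natDegree = n + 1 := by omega
    set F := cont f with hF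
    set b := g.coeff (n + 1) with hb
    set g' := g.eraseLead with hg'def
    set G := F ^ (n + 1) * cont (f * g) with hG
    have hg'deg : g'.natDegree ≤ n := by
      show g.eraseLead.natDegree ≤ n
      have := g.eraseLead_natDegree_le
      omega
    have hgsplit : g = g' + C b * X ^ (n + 1) := by
      have hlc : g.leadingCoeff = b := by rw [hb, ← hdeg]; rfl
      conv_lhs => rw [← g.eraseLead_add_C_mul_X_pow]
      rw [hlc, hdeg]
    -- K1
    have K1 : cont (f * g') ≤ cont (f * g) + Ideal.span {b} * F := by
      have hsplit : f * g' = f * g + C (-b) * X ^ (n + 1) * f := by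
        rw [map_neg]
        have : g' = g - C b * X ^ (n + 1) := by rw [hgsplit]; ring
        rw [this]; ring
      calc cont (f * g') ≤ cont (f * g) + cont (C (-b) * X ^ (n + 1) * f) := by
            rw [hsplit]; exact cont_add_le _ _
        _ ≤ cont (f * g) + Ideal.span {-b} * F := add_le_add_right (cont_C_mul_X_pow_mul_le _ _ _) _
        _ = cont (f * g) + Ideal.span {b} * F := by rw [Ideal.span_singleton_neg]
    -- the chain inclusion
    have hchain : cont g' * F ^ (n + 1) ≤ F ^ n * cont (f * g) + Ideal.span {b} * F ^ (n + 1) := by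
      calc cont g' * F ^ (n + 1) = F ^ (n + 1) * cont g' := mul_comm _ _
        _ ≤ F ^ n * cont (f * g') := IH g' hg'deg
        _ ≤ F ^ n * (cont (f * g) + Ideal.span {b} * F) := Ideal.mul_mono_right K1
        _ = F ^ n * cont (f * g) + Ideal.span {b} * F ^ (n + 1) := by ring
    -- K2 : descending induction
    have K2 : ∀ s, b * f.coeff s ∈ G.colon ((F ^ (n + 1) : Ideal R) : Set R) := by
      have K2' : ∀ k s, f.natDegree < s + k → b * f.coeff s ∈ G.colon ((F ^ (n + 1) : Ideal R) : Set R) := by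
        intro k
        induction k with
        | zero =>
          intro s hs
          rw [coeff_eq_zero_of_natDegree_lt (by omega), mul_zero]
          exact zero_mem _
        | succ k IHk =>
          intro s hs
          by_cases hcase : f.natDegree < s + k
          · exact IHk s hcase
          rw [Submodule.mem_colon]
          intro y hy
          rw [smul_eq_mul]
          have coeffid := coeff_mul_expand (f := f) (g := g) (le_of_eq hdeg) s
          rw [← hb] at coeffid
          have hbfs : b * f.coeff s = (f * g).coeff (n + 1 + s) -
              ∑ t ∈ Finset.range (n + 1), g.coeff t * f.coeff (n + 1 + s - t) :=
            eq_sub_of_add_eq coeffid.symm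
          rw [hbfs, sub_mul, Finset.sum_mul]
          refine sub_mem ?_ (Ideal.sum_mem _ ?_)
          · rw [mul_comm]
            exact Ideal.mul_mem_mul hy (coeff_mem_cont _ _)
          · intro t ht
            rw [Finset.mem_range] at ht
            set s' := n + 1 + s - t with hs'
            have hs'big : f.natDegree < s' + k := by omega
            have IHs' := IHk s' hs'big
            have hgt : g.coeff t = g'.coeff t := by
              rw [hg'def, eraseLead_coeff, hdeg]
              rw [if_neg (by omega)]
            have h1 : g.coeff t * y ∈ cont g' * F ^ (n + 1) := by
              rw [hgt]
              exact Ideal.mul_mem_mul (coeff_mem_cont g' t) hy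
            have h2 := hchain h1
            obtain ⟨u, hu, v, hv, huv⟩ := Submodule.mem_sup.mp h2
            have hterm : g.coeff t * f.coeff s' * y = f.coeff s' * (g.coeff t * y) := by ring
            rw [hterm, ← huv, mul_add]
            refine add_mem ?_ ?_
            · have h3 : f.coeff s' * u ∈ F * (F ^ n * cont (f * g)) :=
                Ideal.mul_mem_mul (coeff_mem_cont f s') hu
              have h4 : F * (F ^ n * cont (f * g)) = G := by rw [hG]; ring
              rwa [h4] at h3
            · refine Submodule.mul_induction_on hv ?_ ?_
              · intro r hr w hw
                rw [Ideal.mem_span_singleton] at hr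
                obtain ⟨c, rfl⟩ := hr
                have he : f.coeff s' * (b * c * w) = (b * f.coeff s') * (c * w) := by ring
                rw [he]
                have hcw : c * w ∈ F ^ (n + 1) := Ideal.mul_mem_left _ c hw
                have := Submodule.mem_colon.mp IHs' (c * w) hcw
                rwa [smul_eq_mul] at this
              · intro x₁ x₂ hx₁ hx₂
                rw [mul_add]
                exact add_mem hx₁ hx₂
      intro s
      exact K2' (f.natDegree + 1) s (by omega)
    -- assemble
    have hbF : Ideal.span {b} * F ≤ G.colon ((F ^ (n + 1) : Ideal R) : Set R) := by
      rw [Ideal.mul_le]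
      intro r hr a ha
      rw [Ideal.mem_span_singleton] at hr
      obtain ⟨c, rfl⟩ := hr
      have he : b * c * a = c * (b * a) := by ring
      rw [he]
      refine Ideal.mul_mem_left _ c ?_
      refine Submodule.span_induction (p := fun a _ => b * a ∈ G.colon ((F ^ (n + 1) : Ideal R) : Set R)) ?_ ?_ ?_ ?_ ha
      · rintro _ ⟨s, rfl⟩
        exact K2 s
      · simp
      · intro x y _ _ hx hy
        show b * (x + y) ∈ _
        rw [mul_add]; exact add_mem hx hy
      · intro c x _ hx
        show b * (c • x) ∈ _
        rw [smul_eq_mul]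
        have : b * (c * x) = c * (b * x) := by ring
        rw [this]
        exact Ideal.mul_mem_left _ c hx
    have hcolon : G.colon ((F ^ (n + 1) : Ideal R) : Set R) * F ^ (n + 1) ≤ G := by
      rw [Ideal.mul_le]
      intro r hr y hy
      have := Submodule.mem_colon.mp hr y hy
      rwa [smul_eq_mul] at this
    have hbig : Ideal.span {b} * F ^ (n + 2) ≤ G := by
      calc Ideal.span {b} * F ^ (n + 2) = (Ideal.span {b} * F) * F ^ (n + 1) := by ring
        _ ≤ G.colon ((F ^ (n + 1) : Ideal R) : Set R) * F ^ (n + 1) := Ideal.mul_mono_left hbF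
        _ ≤ G := hcolon
    have hcg : cont g ≤ cont g' + Ideal.span {b} := by
      rw [cont_le_iff]
      intro i
      by_cases hi : i = n + 1
      · subst hi
        exact Submodule.mem_sup_right (Ideal.mem_span_singleton_self b)
      · have : g.coeff i = g'.coeff i := by
          rw [hg'def, eraseLead_coeff, hdeg, if_neg hi]
        rw [this]
        exact Submodule.mem_sup_left (coeff_mem_cont g' i)
    calc F ^ (n + 2) * cont g ≤ F ^ (n + 2) * (cont g' + Ideal.span {b}) :=
          Ideal.mul_mono_right hcg
      _ = F * (F ^ (n + 1) * cont g') + Ideal.span {b} * F ^ (n + 2) := by ring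
      _ ≤ F * (F ^ n * cont (f * g')) + Ideal.span {b} * F ^ (n + 2) :=
          add_le_add_left (Ideal.mul_mono_right (IH g' hg'deg)) _
      _ ≤ F * (F ^ n * (cont (f * g) + Ideal.span {b} * F)) + Ideal.span {b} * F ^ (n + 2) :=
          add_le_add_left (Ideal.mul_mono_right (Ideal.mul_mono_right K1)) _
      _ = G + (Ideal.span {b} * F ^ (n + 2) + Ideal.span {b} * F ^ (n + 2)) := by rw [hG]; ring
      _ ≤ G + (G + G) := add_le_add_right (add_le_add hbig hbig) _
      _ = G := by simp

lemma cont_fg (p : R[X]) : (cont p).FG := by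
  classical
  have heq : cont p = Ideal.span ↑(insert (0 : R) (p.support.image p.coeff)) := by
    apply le_antisymm
    · apply Ideal.span_le.mpr
      rintro _ ⟨i, rfl⟩
      by_cases h : p.coeff i = 0
      · rw [h]
        exact Ideal.subset_span (by simp)
      · refine Ideal.subset_span ?_
        simp only [Finset.coe_insert, Set.mem_insert_iff, Finset.coe_image, Set.mem_image]
        exact Or.inr ⟨i, by simpa using h, rfl⟩
    · apply Ideal.span_le.mpr
      intro y hy
      simp only [Finset.coe_insert, Set.mem_insert_iff, Finset.coe_image, Set.mem_image] at hy
      rcases hy with rfl | ⟨i, _, rfl⟩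
      · exact zero_mem _
      · exact coeff_mem_cont p i
  rw [heq]
  exact ⟨_, rfl⟩



lemma memIntCl_of_subsingleton [Subsingleton R] (I : Ideal R) (x : R) : memIntCl I x :=
  ⟨1, one_pos, fun _ => 0, fun i _ _ => zero_mem _, Subsingleton.elim _ _⟩

lemma memIntCl_of_mem {I : Ideal R} {x : R} (hx : x ∈ I) : memIntCl I x := by
  refine ⟨1, one_pos, fun _ => -x, fun i h1 h2 => ?_, by simp⟩
  have : i = 1 := le_antisymm h2 h1
  subst this
  simpa using neg_mem hx

lemma memIntCl_mono {I J : Ideal R} (h : I ≤ J) {x : R} (hx : memIntCl I x) : memIntCl J x := by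
  obtain ⟨k, hk, a, ha, heq⟩ := hx
  exact ⟨k, hk, a, fun i h1 h2 => Ideal.pow_right_mono h i (ha i h1 h2), heq⟩

lemma sum_Icc_one_eq {M : Type*} [AddCommMonoid M] (d : ℕ) (F : ℕ → M) :
    ∑ j ∈ Finset.Icc 1 d, F j = ∑ i ∈ Finset.range d, F (i + 1) := by
  induction d with
  | zero => simp
  | succ d ih =>
    rw [Finset.sum_Icc_succ_top (by omega), ih, Finset.sum_range_succ]

lemma memIntCl_of_stable {I J : Ideal R} (hJfg : J.FG) {n : ℕ}
    (hst : J ^ (n + 1) ≤ I * J ^ n) : ∀ x ∈ J, memIntCl I x := by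
  intro x hx
  cases subsingleton_or_nontrivial R
  · exact memIntCl_of_subsingleton I x
  rcases Nat.eq_zero_or_pos n with rfl | hn
  · refine memIntCl_of_mem ?_
    have : J ^ 1 ≤ I := by simpa using hst
    exact this (by simpa using hx)
  -- the module J^n
  haveI : Module.Finite R ↥(J ^ n : Ideal R) :=
    Module.Finite.iff_fg.mpr (Submodule.FG.pow hJfg n)
  have hJn : ∀ m ∈ (J ^ n : Ideal R), x * m ∈ (J ^ n : Ideal R) := by
    intro m hm
    have h1 : x * m ∈ J ^ (n + 1) := by
      rw [pow_succ']
      exact Ideal.mul_mem_mul hx hm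
    exact Ideal.mul_le_right (hst h1)
  let φ : Module.End R ↥(J ^ n : Ideal R) :=
    { toFun := fun m => ⟨x * ↑m, hJn _ m.2⟩
      map_add' := by intro a b; ext; simp [mul_add]
      map_smul' := by intro c a; ext; simp [smul_eq_mul]; ring }
  have hrange : LinearMap.range φ ≤ I • (⊤ : Submodule R ↥(J ^ n : Ideal R)) := by
    rintro _ ⟨m, rfl⟩
    rw [Submodule.mem_smul_top_iff]
    have h1 : x * (m : R) ∈ J ^ (n + 1) := by
      rw [pow_succ']
      exact Ideal.mul_mem_mul hx m.2
    have h2 : (↑(φ m) : R) ∈ I * J ^ n := hst h1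
    rwa [Ideal.smul_eq_mul]
  obtain ⟨p, hmonic, -, hcoeff, heval⟩ :=
    LinearMap.exists_monic_and_coeff_mem_pow_and_aeval_eq_zero_of_range_le_smul R φ I hrange
  set d := p.natDegree with hd
  have hφpow : ∀ (i : ℕ) (m : ↥(J ^ n : Ideal R)), ((φ ^ i) m : R) = x ^ i * ↑m := by
    intro i
    induction i with
    | zero => intro m; simp
    | succ i ih =>
      intro m
      rw [pow_succ]
      have : ((φ ^ i * φ) m : R) = ((φ ^ i) (φ m) : R) := rfl
      rw [this, ih]
      show x ^ i * (x * ↑m) = x ^ (i + 1) * ↑m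
      ring
  have hxn : x ^ n ∈ (J ^ n : Ideal R) := Ideal.pow_mem_pow hx n
  have h0 : (Polynomial.aeval φ p) ⟨x ^ n, hxn⟩ = 0 := by rw [heval]; rfl
  rw [Polynomial.aeval_eq_sum_range] at h0
  have h1 := congrArg Subtype.val h0
  simp only [LinearMap.coe_sum, Finset.sum_apply, LinearMap.smul_apply,
    AddSubmonoidClass.coe_finset_sum, SetLike.val_smul, smul_eq_mul, hφpow,
    ZeroMemClass.coe_zero] at h1
  -- h1 : ∑ i ∈ Finset.range (d + 1), p.coeff i * (x ^ i * x ^ n) = 0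
  refine ⟨n + d, by omega, fun j => if j ≤ d then p.coeff (d - j) else 0, ?_, ?_⟩
  · intro j hj1 hj2
    show (if j ≤ d then p.coeff (d - j) else 0) ∈ I ^ j
    by_cases hjd : j ≤ d
    · rw [if_pos hjd]
      have h2 := hcoeff (d - j)
      have h3 : d - (d - j) = j := by omega
      rwa [h3] at h2
    · rw [if_neg hjd]; exact zero_mem _
  · have hsub : Finset.Icc 1 d ⊆ Finset.Icc 1 (n + d) := Finset.Icc_subset_Icc_right (by omega)
    have hzero : ∀ j ∈ Finset.Icc 1 (n + d), j ∉ Finset.Icc 1 d →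
        (if j ≤ d then p.coeff (d - j) else 0) * x ^ (n + d - j) = 0 := by
      intro j hj hnj
      rw [Finset.mem_Icc] at hj
      rw [Finset.mem_Icc] at hnj
      rw [if_neg (by omega), zero_mul]
    rw [← Finset.sum_subset hsub hzero]
    have hre : ∑ j ∈ Finset.Icc 1 d, (if j ≤ d then p.coeff (d - j) else 0) * x ^ (n + d - j)
        = ∑ i ∈ Finset.range d, p.coeff i * (x ^ i * x ^ n) := by
      rw [sum_Icc_one_eq]
      rw [← Finset.sum_range_reflect (fun i => p.coeff i * (x ^ i * x ^ n)) d]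
      refine Finset.sum_congr rfl ?_
      intro i hi
      rw [Finset.mem_range] at hi
      rw [if_pos (by omega)]
      have e1 : d - (i + 1) = d - 1 - i := by omega
      have e2 : n + d - (i + 1) = (d - 1 - i) + n := by omega
      rw [e1, e2, pow_add]
    rw [hre]
    have hlead : p.coeff d = 1 := hmonic.coeff_natDegree
    calc x ^ (n + d) + ∑ i ∈ Finset.range d, p.coeff i * (x ^ i * x ^ n)
        = ∑ i ∈ Finset.range (d + 1), p.coeff i * (x ^ i * x ^ n) := by
          rw [Finset.sum_range_succ, hlead]; ring
      _ = 0 := h1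



lemma isIntegral_CX_of_memIntCl {I : Ideal R} {x : R} (h : memIntCl I x) :
    IsIntegral ↥(reesAlgebra I) (C x * X : R[X]) := by
  obtain ⟨k, hk, a, ha, heq⟩ := h
  classical
  set c : ℕ → ↥(reesAlgebra I) := fun j =>
    if hj : 1 ≤ j ∧ j ≤ k then
      ⟨monomial j (a j), reesAlgebra.monomial_mem.mpr (ha j hj.1 hj.2)⟩
    else 0 with hc
  refine ⟨X ^ k + ∑ j ∈ Finset.Icc 1 k, Polynomial.C (c j) * X ^ (k - j), ?_, ?_⟩
  · apply monic_X_pow_add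
    refine lt_of_le_of_lt (Polynomial.degree_sum_le _ _) ?_
    rw [Finset.sup_lt_iff (by exact_mod_cast WithBot.bot_lt_coe k)]
    intro j hj
    rw [Finset.mem_Icc] at hj
    refine lt_of_le_of_lt (degree_C_mul_X_pow_le _ _) ?_
    exact_mod_cast Nat.sub_lt_of_pos_le hj.1 hj.2
  · rw [eval₂_add, eval₂_pow, eval₂_X, eval₂_finset_sum]
    have hterm : ∀ j ∈ Finset.Icc 1 k,
        eval₂ (algebraMap ↥(reesAlgebra I) R[X]) (C x * X) (Polynomial.C (c j) * X ^ (k - j))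
          = Polynomial.C (a j * x ^ (k - j)) * X ^ k := by
      intro j hj
      rw [Finset.mem_Icc] at hj
      rw [eval₂_mul, eval₂_C, eval₂_X_pow]
      have hcj : (algebraMap ↥(reesAlgebra I) R[X]) (c j) = Polynomial.C (a j) * X ^ j := by
        rw [hc]
        simp only [dif_pos hj]
        rw [C_mul_X_pow_eq_monomial]
        rfl
      have hXk : (X : R[X]) ^ j * X ^ (k - j) = X ^ k := by
        rw [← pow_add]
        congr 1
        omega
      rw [hcj, map_mul, C_pow, ← hXk]
      ring
    rw [Finset.sum_congr rfl hterm, ← Finset.sum_mul, ← map_sum Polynomial.C, mul_pow, ← C_pow,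
      ← add_mul, ← Polynomial.C_add, heq, Polynomial.C_0, zero_mul]

lemma sum_Icc_one_eq' {M : Type*} [AddCommMonoid M] (d : ℕ) (F : ℕ → M) :
    ∑ j ∈ Finset.Icc 1 d, F j = ∑ i ∈ Finset.range d, F (i + 1) := by
  induction d with
  | zero => simp
  | succ d ih =>
    rw [Finset.sum_Icc_succ_top (by omega), ih, Finset.sum_range_succ]

lemma memIntCl_of_isIntegral_CX [Nontrivial R] {I : Ideal R} {x : R}
    (h : IsIntegral ↥(reesAlgebra I) (C x * X : R[X])) : memIntCl I x := by
  obtain ⟨q, hq, heval⟩ := h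
  set k := q.natDegree with hk
  have hk1 : 0 < k := by
    by_contra hcon
    have hk0 : q.natDegree = 0 := by omega
    have : q = 1 := hq.natDegree_eq_zero.mp hk0
    rw [this] at heval
    simp at heval
  rw [Polynomial.eval₂_eq_sum_range] at heval
  have h1 := congrArg (fun p : R[X] => p.coeff k) heval
  simp only [Polynomial.finset_sum_coeff, Polynomial.coeff_zero] at h1
  have hterm : ∀ i ∈ Finset.range (k + 1),
      ((algebraMap ↥(reesAlgebra I) R[X]) (q.coeff i) * (C x * X) ^ i).coeff k
        = ((q.coeff i : R[X])).coeff (k - i) * x ^ i := by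
    intro i hi
    rw [Finset.mem_range] at hi
    have e1 : (C x * X : R[X]) ^ i = C (x ^ i) * X ^ i := by rw [mul_pow, ← C_pow]
    have e2 : (algebraMap ↥(reesAlgebra I) R[X]) (q.coeff i) * (C (x ^ i) * X ^ i)
        = ((q.coeff i : R[X]) * C (x ^ i)) * X ^ i := by
      rw [← mul_assoc]; rfl
    rw [e1, e2, Polynomial.coeff_mul_X_pow', if_pos (by omega), Polynomial.coeff_mul_C]
  rw [Finset.sum_congr rfl hterm] at h1
  -- h1 : ∑ i ∈ range (k+1), (↑(q.coeff i)).coeff (k - i) * x ^ i = 0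
  refine ⟨k, hk1, fun j => ((q.coeff (k - j) : R[X])).coeff j, fun j hj1 hj2 => ?_, ?_⟩
  · exact (q.coeff (k - j)).2 j
  · rw [sum_Icc_one_eq']
    have hptw : ∀ i ∈ Finset.range k,
        (fun j => ((q.coeff (k - j) : R[X])).coeff j) (i + 1) * x ^ (k - (i + 1))
          = (fun j => ((q.coeff j : R[X])).coeff (k - j) * x ^ j) (k - 1 - i) := by
      intro i hi
      rw [Finset.mem_range] at hi
      show ((q.coeff (k - (i + 1)) : R[X])).coeff (i + 1) * x ^ (k - (i + 1))
        = ((q.coeff (k - 1 - i) : R[X])).coeff (k - (k - 1 - i)) * x ^ (k - 1 - i)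
      have e1 : k - (i + 1) = k - 1 - i := by omega
      have e2 : k - (k - 1 - i) = i + 1 := by omega
      rw [e1, e2]
    rw [Finset.sum_congr rfl hptw]
    rw [Finset.sum_range_succ,
      ← Finset.sum_range_reflect (fun j => ((q.coeff j : R[X])).coeff (k - j) * x ^ j) k] at h1
    have hlead : ((q.coeff k : R[X])).coeff (k - k) = 1 := by
      rw [Nat.sub_self, hq.coeff_natDegree]
      simp
    rw [hlead, one_mul] at h1
    rw [add_comm]
    exact h1

lemma memIntCl_trans' {I J : Ideal R} (h1 : ∀ a ∈ J, memIntCl I a) {x : R}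
    (h2 : memIntCl J x) : memIntCl I x := by
  cases subsingleton_or_nontrivial R
  · exact ⟨1, one_pos, fun _ => 0, fun i _ _ => zero_mem _, Subsingleton.elim _ _⟩
  set S := reesAlgebra I with hS
  set T := (integralClosure ↥S R[X]).restrictScalars R with hT
  have hle : reesAlgebra J ≤ T := by
    rw [← adjoin_monomial_eq_reesAlgebra]
    apply Algebra.adjoin_le
    rintro _ ⟨a, ha, rfl⟩
    show IsIntegral ↥S ((monomial 1 : R →ₗ[R] R[X]) a)
    have : ((monomial 1 : R →ₗ[R] R[X]) a) = C a * X := by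
      rw [← C_mul_X_pow_eq_monomial, pow_one]
    rw [this]
    exact isIntegral_CX_of_memIntCl (h1 a ha)
  have hxJ : IsIntegral ↥(reesAlgebra J) (C x * X : R[X]) := isIntegral_CX_of_memIntCl h2
  obtain ⟨q, hqm, hqe⟩ := hxJ
  let ψ : ↥(reesAlgebra J) →+* ↥(integralClosure ↥S R[X]) :=
    { toFun := fun p => ⟨(p : R[X]), hle p.2⟩
      map_one' := rfl
      map_mul' := fun a b => rfl
      map_zero' := rfl
      map_add' := fun a b => rfl }
  have hint : IsIntegral ↥(integralClosure ↥S R[X]) (C x * X : R[X]) := by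
    refine ⟨q.map ψ, hqm.map ψ, ?_⟩
    rw [Polynomial.eval₂_map]
    have hcomp : (algebraMap ↥(integralClosure ↥S R[X]) R[X]).comp ψ
        = algebraMap ↥(reesAlgebra J) R[X] := by
      ext p
      rfl
    rw [hcomp]
    exact hqe
  have hfin : IsIntegral ↥S (C x * X : R[X]) :=
    isIntegral_trans (R := ↥S) (A := ↥(integralClosure ↥S R[X])) _ hint
  exact memIntCl_of_isIntegral_CX hfin

end Aux

/-- For polynomials `f`, `g` over a commutative ring, `c(f)·c(g)` is contained in the
integral closure of `c(fg)`; in particular `c(fg)` and `c(f)·c(g)` have the same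
integral closure. -/
theorem content_mul_subset_integralClosure {R : Type*} [CommRing R] (f g : R[X]) :
    (∀ x ∈ cont f * cont g, memIntCl (cont (f * g)) x) ∧
    (∀ x : R, memIntCl (cont (f * g)) x ↔ memIntCl (cont f * cont g) x) := by
  set n := g.natDegree with hn
  have hIJ : cont (f * g) ≤ cont f * cont g := cont_mul_le f g
  have hst : (cont f * cont g) ^ (n + 1) ≤ cont (f * g) * (cont f * cont g) ^ n := by
    calc (cont f * cont g) ^ (n + 1)
        = (cont f ^ (n + 1) * cont g) * cont g ^ n := by ring
      _ ≤ (cont f ^ n * cont (f * g)) * cont g ^ n :=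
          Ideal.mul_mono_left (dedekind_mertens f n g le_rfl)
      _ = cont (f * g) * (cont f * cont g) ^ n := by ring
  have hJfg : (cont f * cont g).FG := Submodule.FG.mul (cont_fg f) (cont_fg g)
  have part1 : ∀ x ∈ cont f * cont g, memIntCl (cont (f * g)) x :=
    memIntCl_of_stable hJfg hst
  refine ⟨part1, fun x => ⟨fun h => memIntCl_mono hIJ h, fun h => memIntCl_trans' part1 h⟩⟩
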